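/- Let A₁, A₂ be abelian groups with subgroups B₁ ⊂ A₁, B₂ ⊂ A₂, and let C ⊂ A₁ × A₂ be a subgroup. Then there is an exact sequence 0 → A₂ / (B₂ + im(ker(C → A₁/B₁) → A₂)) → (A₁ × A₂) / (B₁ × B₂ + C) → A₁ / (B₁ + im(C → A₁)) → 0, where C → A₁/B₁ is the composite of the projection C → A₁ with the quotient map, and the sums are taken inside A₁ × A₂ (resp. A₁, A₂) via the natural embeddings. -/

import Mathlib

/-- For abelian groups `B₁ ⊂ A₁`, `B₂ ⊂ A₂` and `C ⊂ A₁ × A₂`, there is an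
exact sequence
`0 → A₂/(B₂ + im(ker(C → A₁/B₁) → A₂)) → (A₁×A₂)/(B₁×B₂ + C) → A₁/(B₁ + im(C → A₁)) → 0`,
the first map induced by `a₂ ↦ [(0, a₂)]` and the second by `(a₁, a₂) ↦ a₁`.
Note `ker(C → A₁/B₁)` maps to `A₂` with image `(C ⊓ (B₁ × ⊤)).map snd`. -/
theorem stmt_3 (A₁ A₂ : Type*) [AddCommGroup A₁] [AddCommGroup A₂]
    (B₁ : AddSubgroup A₁) (B₂ : AddSubgroup A₂) (C : AddSubgroup (A₁ × A₂)) :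
    ∃ (f : A₂ ⧸ (B₂ ⊔ (C ⊓ B₁.prod ⊤).map (AddMonoidHom.snd A₁ A₂)) →+
        (A₁ × A₂) ⧸ (B₁.prod B₂ ⊔ C))
      (g : (A₁ × A₂) ⧸ (B₁.prod B₂ ⊔ C) →+
        A₁ ⧸ (B₁ ⊔ C.map (AddMonoidHom.fst A₁ A₂))),
      (∀ a₂ : A₂, f (QuotientAddGroup.mk a₂) = QuotientAddGroup.mk ((0 : A₁), a₂)) ∧
      (∀ a : A₁ × A₂, g (QuotientAddGroup.mk a) = QuotientAddGroup.mk a.1) ∧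
      Function.Injective f ∧ Function.Surjective g ∧ Function.Exact ⇑f ⇑g := by
  set N₂ := B₂ ⊔ (C ⊓ B₁.prod ⊤).map (AddMonoidHom.snd A₁ A₂) with hN₂
  set N := B₁.prod B₂ ⊔ C with hN
  set N₁ := B₁ ⊔ C.map (AddMonoidHom.fst A₁ A₂) with hN₁
  -- key membership lemma: (0, a₂) ∈ N ↔ a₂ ∈ N₂
  have key : ∀ a₂ : A₂, ((0 : A₁), a₂) ∈ N ↔ a₂ ∈ N₂ := by
    intro a₂
    constructor
    · intro h
      rw [hN, AddSubgroup.mem_sup] at h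
      obtain ⟨b, hb, c, hc, hbc⟩ := h
      have hb1 : b.1 ∈ B₁ := hb.1
      have hb2 : b.2 ∈ B₂ := hb.2
      have hceq : c = ((0 : A₁), a₂) - b := by rw [← hbc]; abel
      have hc1 : c.1 ∈ B₁ := by
        rw [hceq]; simpa using B₁.neg_mem hb1
      have hcmem : c ∈ C ⊓ B₁.prod ⊤ := ⟨hc, hc1, trivial⟩
      have hsnd : c.2 ∈ (C ⊓ B₁.prod ⊤).map (AddMonoidHom.snd A₁ A₂) :=
        ⟨c, hcmem, rfl⟩
      have : a₂ = b.2 + c.2 := by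
        rw [hceq]; simp
      rw [this, hN₂, AddSubgroup.mem_sup]
      exact ⟨b.2, hb2, c.2, hsnd, rfl⟩
    · intro h
      rw [hN₂, AddSubgroup.mem_sup] at h
      obtain ⟨b₂, hb₂, y, hy, hsum⟩ := h
      obtain ⟨c, hc, rfl⟩ := hy
      have h1 : ((0 : A₁), b₂) ∈ B₁.prod B₂ := ⟨B₁.zero_mem, hb₂⟩
      have h2 : ((-c.1 : A₁), b₂) ∈ B₁.prod B₂ := ⟨B₁.neg_mem hc.2.1, hb₂⟩
      have : ((0 : A₁), b₂ + c.2) = ((-c.1 : A₁), b₂) + c := by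
        ext <;> simp
      rw [← hsum]
      show ((0 : A₁), b₂ + c.2) ∈ N
      rw [this, hN]
      exact AddSubgroup.add_mem _ (AddSubgroup.mem_sup_left h2)
        (AddSubgroup.mem_sup_right hc.1)
  -- define f
  have f_ok : ∀ a₂ ∈ N₂,
      (QuotientAddGroup.mk' N).comp ((AddMonoidHom.inr A₁ A₂)) a₂ = 0 := by
    intro a₂ h
    simpa [QuotientAddGroup.eq_zero_iff] using (key a₂).mpr h
  refine ⟨QuotientAddGroup.lift N₂ ((QuotientAddGroup.mk' N).comp (AddMonoidHom.inr A₁ A₂)) f_ok,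
    ?_, ?_⟩
  · -- define g
    have g_ok : ∀ a ∈ N,
        (QuotientAddGroup.mk' N₁).comp (AddMonoidHom.fst A₁ A₂) a = 0 := by
      intro a h
      rw [hN, AddSubgroup.mem_sup] at h
      obtain ⟨b, hb, c, hc, hbc⟩ := h
      have : a.1 = b.1 + c.1 := by rw [← hbc]; rfl
      simp only [AddMonoidHom.comp_apply, AddMonoidHom.coe_fst,
        QuotientAddGroup.mk'_apply, QuotientAddGroup.eq_zero_iff]
      rw [this, hN₁]
      exact AddSubgroup.add_mem _ (AddSubgroup.mem_sup_left hb.1)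
        (AddSubgroup.mem_sup_right ⟨c, hc, rfl⟩)
    exact QuotientAddGroup.lift N ((QuotientAddGroup.mk' N₁).comp (AddMonoidHom.fst A₁ A₂)) g_ok
  refine ⟨fun a₂ => rfl, fun a => rfl, ?_, ?_, ?_⟩
  · -- injectivity of f
    rw [injective_iff_map_eq_zero]
    intro x hx
    obtain ⟨a₂, rfl⟩ := QuotientAddGroup.mk_surjective x
    have : ((0 : A₁), a₂) ∈ N := by
      exact (QuotientAddGroup.eq_zero_iff ((0 : A₁), a₂)).mp hx
    rw [QuotientAddGroup.eq_zero_iff]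
    exact (key a₂).mp this
  · -- surjectivity of g
    intro y
    obtain ⟨a₁, rfl⟩ := QuotientAddGroup.mk_surjective y
    exact ⟨QuotientAddGroup.mk (a₁, 0), rfl⟩
  · -- exactness
    intro x
    constructor
    · intro hx
      obtain ⟨a, rfl⟩ := QuotientAddGroup.mk_surjective x
      have : a.1 ∈ N₁ := by
        exact (QuotientAddGroup.eq_zero_iff a.1).mp hx
      rw [hN₁, AddSubgroup.mem_sup] at this
      obtain ⟨b₁, hb₁, y, hy, hsum⟩ := this
      obtain ⟨c, hc, rfl⟩ := hy
      refine ⟨QuotientAddGroup.mk (a.2 - c.2), ?_⟩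
      show QuotientAddGroup.mk ((0 : A₁), a.2 - c.2) = QuotientAddGroup.mk a
      rw [QuotientAddGroup.eq]
      have heq : -((0 : A₁), a.2 - c.2) + a = (b₁, 0) + c := by
        ext
        · simpa using hsum.symm
        · simp
      rw [heq, hN]
      exact AddSubgroup.add_mem _ (AddSubgroup.mem_sup_left ⟨hb₁, B₂.zero_mem⟩)
        (AddSubgroup.mem_sup_right hc)
    · rintro ⟨y, rfl⟩
      obtain ⟨a₂, rfl⟩ := QuotientAddGroup.mk_surjective y
      show ((0 : A₁) : A₁ ⧸ N₁) = 0
      rw [QuotientAddGroup.eq_zero_iff]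
      exact N₁.zero_mem
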